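/- Let n ≥ 1 and consider items 1,…,n with real profits p_i ≥ 0 and real weights w_i > 0, sorted so that p_1/w_1 ≥ p_2/w_2 ≥ … ≥ p_n/w_n, and let W ≥ 0 be a real capacity. Suppose k is the smallest index with ∑_{i=1}^{k} w_i > W. Then every set S ⊆ {1,…,n} with ∑_{i∈S} w_i ≤ W satisfies ∑_{i∈S} p_i ≤ ∑_{i=1}^{k} p_i. -/

import Mathlib

/-- Greedy/LP-relaxation bound for the knapsack problem: the total profit of the
prefix of items up to and including the break item `k` upper-bounds the profit of
every feasible set. -/
theorem knapsack_prefix_bound (n : ℕ) (hn : 1 ≤ n) (p w : Fin n → ℝ)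
    (hp : ∀ i, 0 ≤ p i) (hw : ∀ i, 0 < w i)
    (hsort : ∀ i j : Fin n, i ≤ j → p j / w j ≤ p i / w i)
    (W : ℝ) (hW : 0 ≤ W)
    (k : Fin n)
    (hk : W < ∑ i ∈ Finset.Iic k, w i)
    (hkmin : ∀ j : Fin n, j < k → ∑ i ∈ Finset.Iic j, w i ≤ W)
    (S : Finset (Fin n)) (hS : ∑ i ∈ S, w i ≤ W) :
    ∑ i ∈ S, p i ≤ ∑ i ∈ Finset.Iic k, p i := by
  set r := p k / w k with hr
  have hr0 : 0 ≤ r := div_nonneg (hp k) (hw k).le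
  set T := Finset.Iic k with hT
  -- items outside the prefix have ratio ≤ r
  have h1 : ∑ i ∈ S \ T, p i ≤ r * ∑ i ∈ S \ T, w i := by
    rw [Finset.mul_sum]
    apply Finset.sum_le_sum
    intro i hi
    have hik : k ≤ i := by
      have := (Finset.mem_sdiff.mp hi).2
      simp only [hT, Finset.mem_Iic, not_le] at this
      exact this.le
    have h := hsort k i hik
    rwa [div_le_iff₀ (hw i)] at h
  -- items in the prefix have ratio ≥ r
  have h2 : r * ∑ i ∈ T \ S, w i ≤ ∑ i ∈ T \ S, p i := by
    rw [Finset.mul_sum]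
    apply Finset.sum_le_sum
    intro i hi
    have hik : i ≤ k := by
      have := (Finset.mem_sdiff.mp hi).1
      simpa [hT, Finset.mem_Iic] using this
    have h := hsort i k hik
    rw [le_div_iff₀ (hw i)] at h
    linarith
  have hsplitS : ∑ i ∈ S ∩ T, w i + ∑ i ∈ S \ T, w i = ∑ i ∈ S, w i :=
    Finset.sum_inter_add_sum_sdiff S T w
  have hsplitT : ∑ i ∈ T ∩ S, w i + ∑ i ∈ T \ S, w i = ∑ i ∈ T, w i :=
    Finset.sum_inter_add_sum_sdiff T S w
  have hcomm : ∑ i ∈ T ∩ S, w i = ∑ i ∈ S ∩ T, w i := by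
    rw [Finset.inter_comm]
  have hwle : ∑ i ∈ S \ T, w i ≤ ∑ i ∈ T \ S, w i := by linarith
  have hsplitSp : ∑ i ∈ S ∩ T, p i + ∑ i ∈ S \ T, p i = ∑ i ∈ S, p i :=
    Finset.sum_inter_add_sum_sdiff S T p
  have hsplitTp : ∑ i ∈ T ∩ S, p i + ∑ i ∈ T \ S, p i = ∑ i ∈ T, p i :=
    Finset.sum_inter_add_sum_sdiff T S p
  have hcommp : ∑ i ∈ T ∩ S, p i = ∑ i ∈ S ∩ T, p i := by
    rw [Finset.inter_comm]
  have := mul_le_mul_of_nonneg_left hwle hr0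
  linarith
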